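/- Influence function of the MDPDE (Result 5): fix β > 0, θ₀ in the interior of Θ = (0,∞) × ℝ with J_β(θ₀) invertible, and a cell index n₀ ∈ {1, …, L+1}; let Δ ∈ ℝ^{L+1} be the indicator vector of cell n₀ and g_ε = (1−ε) π(θ₀) + ε Δ. Suppose θ : (−δ, δ) → Θ is differentiable at 0 with θ(0) = θ₀, the map (ε, θ) ↦ ∑_{j=1}^{L+1} π_j(θ)^{β−1} (π_j(θ) − g_{ε,j}) ∇_θ π_j(θ) is such that ∑_{j=1}^{L+1} π_j(θ(ε))^{β−1} (π_j(θ(ε)) − g_{ε,j}) ∇_θ π_j(θ(ε)) = 0 for all ε ∈ (−δ, δ), and θ ↦ π(θ) is twice continuously differentiable near θ₀. Then θ′(0) = J_β(θ₀)⁻¹ W(θ₀)ᵀ D_{π(θ₀)}^{β−1} (Δ − π(θ₀)). -/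

import Mathlib

open Real Finset Filter
open scoped RealInnerProductSpace Topology

private lemma hasDerivAt_mul_of_continuousAt_zero {p h : ℝ → ℝ} {d : ℝ}
    (hp : ContinuousAt p 0) (hh : HasDerivAt h d 0) (h0 : h 0 = 0) :
    HasDerivAt (fun ε => p ε * h ε) (p 0 * d) 0 := by
  rw [hasDerivAt_iff_tendsto_slope]
  have hslope := hasDerivAt_iff_tendsto_slope.mp hh
  have hmain : Filter.Tendsto (fun ε => p ε * slope h 0 ε) (nhdsWithin 0 {(0:ℝ)}ᶜ) (nhds (p 0 * d)) :=
    (hp.tendsto.mono_left nhdsWithin_le_nhds).mul hslope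
  refine hmain.congr' ?_
  filter_upwards [self_mem_nhdsWithin] with ε hε
  simp only [slope_def_field, h0]
  ring

private lemma cumexp_strict_mono {k : ℕ} {τ : ℕ → ℝ} {lam : ℕ → ℝ}
    (hlampos : ∀ i, 0 < lam i)
    (hτmono : ∀ i, i + 1 ≤ k - 1 → τ i < τ (i + 1))
    {i i' : ℕ} {t t' : ℝ}
    (hi1 : 1 ≤ i) (hik : i ≤ k) (hi'1 : 1 ≤ i') (hi'k : i' ≤ k)
    (hti : τ (i - 1) ≤ t) (hti' : τ (i' - 1) ≤ t')
    (htik : i < k → t < τ i) (hti'k : i' < k → t' < τ i')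
    (htt : t < t') :
    (∑ l ∈ Finset.Icc 1 (i - 1), (τ l - τ (l - 1)) * lam l) + lam i * (t - τ (i - 1))
      < (∑ l ∈ Finset.Icc 1 (i' - 1), (τ l - τ (l - 1)) * lam l)
          + lam i' * (t' - τ (i' - 1)) := by
  have hτle : ∀ m n, m ≤ n → n ≤ k - 1 → τ m ≤ τ n := by
    intro m n hmn hnk
    induction n with
    | zero => simp_all
    | succ n ih =>
      rcases Nat.eq_or_lt_of_le hmn with h | h
      · simp [h]
      · exact le_trans (ih (Nat.lt_succ_iff.mp h) (le_trans (Nat.le_succ n) hnk))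
          (le_of_lt (hτmono n hnk))
  rcases lt_trichotomy i i' with h | h | h
  · -- i < i'
    have hsplit : (∑ l ∈ Finset.Icc 1 (i' - 1), (τ l - τ (l - 1)) * lam l)
        = (∑ l ∈ Finset.Icc 1 (i - 1), (τ l - τ (l - 1)) * lam l)
          + ∑ l ∈ Finset.Ioc (i - 1) (i' - 1), (τ l - τ (l - 1)) * lam l := by
      rw [show (1:ℕ) = 0 + 1 from rfl, Finset.Icc_add_one_left_eq_Ioc, Finset.Icc_add_one_left_eq_Ioc]
      exact (Finset.sum_Ioc_consecutive _ (Nat.zero_le _) (by omega)).symm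
    have hmem : i ∈ Finset.Ioc (i - 1) (i' - 1) := by
      rw [Finset.mem_Ioc]; omega
    have hnonneg : ∀ l ∈ Finset.Ioc (i - 1) (i' - 1), 0 ≤ (τ l - τ (l - 1)) * lam l := by
      intro l hl
      rw [Finset.mem_Ioc] at hl
      have h1 : 1 ≤ l := by omega
      have h2 : τ (l - 1) < τ l := by
        have := hτmono (l - 1) (by omega)
        rwa [Nat.sub_add_cancel h1] at this
      exact mul_nonneg (by linarith) (hlampos l).le
    have hsum_ge : (τ i - τ (i - 1)) * lam i
        ≤ ∑ l ∈ Finset.Ioc (i - 1) (i' - 1), (τ l - τ (l - 1)) * lam l :=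
      Finset.single_le_sum hnonneg hmem
    have h1 : lam i * (t - τ (i - 1)) < (τ i - τ (i - 1)) * lam i := by
      have ht : t < τ i := htik (lt_of_lt_of_le h hi'k)
      nlinarith [hlampos i]
    have h2 : 0 ≤ lam i' * (t' - τ (i' - 1)) := mul_nonneg (hlampos i').le (by linarith)
    rw [hsplit]; linarith
  · -- i = i'
    subst h
    have := mul_lt_mul_of_pos_left (show t - τ (i - 1) < t' - τ (i - 1) by linarith) (hlampos i)
    linarith
  · -- i' < i : contradiction
    exfalso
    have h1 : τ i' ≤ τ (i - 1) := hτle i' (i - 1) (by omega) (by omega)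
    have h2 : t' < τ i' := hti'k (lt_of_lt_of_le h hik)
    linarith

/-- Influence function of the MDPDE (Result 5 of the paper): under the SSALT model with
exponential lifetimes, `θ₀` interior to `Θ = (0,∞) × ℝ` (as `EuclideanSpace ℝ (Fin 2)`) with
`J_β(θ₀)` invertible, contamination in cell `n₀` with indicator `Δ` and contaminated mass
function `g_ε = (1−ε) π(θ₀) + ε Δ`: if the curve `ε ↦ θ(ε)` is differentiable at `0` with
`θ(0) = θ₀`, stays in `Θ`, satisfies the DPD estimating equation
`∑_j π_j(θ(ε))^{β−1} (π_j(θ(ε)) − g_{ε,j}) ∇π_j(θ(ε)) = 0` for all `ε ∈ (−δ, δ)`, and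
`π` is twice continuously differentiable near `θ₀`, then
`θ′(0) = J_β(θ₀)⁻¹ W(θ₀)ᵀ D_{π(θ₀)}^{β−1} (Δ − π(θ₀))` (stated componentwise).
Here `gradpi θ j` is the gradient `∇π_j(θ)` (the `j`-th row of `W(θ)`), and
`J_β(θ₀) = W(θ₀)ᵀ D^{β−1} W(θ₀) = ∑_j π_j(θ₀)^{β−1} ∇π_j ∇π_jᵀ`. -/
theorem stmt12
    (k L : ℕ) (x τ tt : ℕ → ℝ) (I : ℕ → ℕ) (β : ℝ)
    (lam a : EuclideanSpace ℝ (Fin 2) → ℕ → ℝ)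
    (GT : EuclideanSpace ℝ (Fin 2) → ℕ → ℝ)
    (piv : EuclideanSpace ℝ (Fin 2) → ℕ → ℝ)
    (gradpi : EuclideanSpace ℝ (Fin 2) → ℕ → EuclideanSpace ℝ (Fin 2))
    (θ₀ : EuclideanSpace ℝ (Fin 2)) (J : Matrix (Fin 2) (Fin 2) ℝ)
    (n₀ : ℕ) (δ : ℝ) (θc : ℝ → EuclideanSpace ℝ (Fin 2))
    (hk : 1 ≤ k) (hL : 1 ≤ L) (hβ : 0 < β) (hθ₀ : 0 < θ₀ 0)
    (hx : ∀ i, 1 ≤ i → i + 1 ≤ k → x i < x (i + 1))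
    (hτ0 : τ 0 = 0)
    (hτmono : ∀ i, i + 1 ≤ k - 1 → τ i < τ (i + 1))
    (ht0 : tt 0 = 0)
    (htmono : ∀ j, j + 1 ≤ L → tt j < tt (j + 1))
    (hchange : ∀ i, 1 ≤ i → i ≤ k - 1 → ∃ j, 1 ≤ j ∧ j ≤ L ∧ tt j = τ i)
    (hreg : ∀ j, j ≤ L →
      1 ≤ I j ∧ I j ≤ k ∧ τ (I j - 1) ≤ tt j ∧ (I j < k → tt j < τ (I j)))
    (hlam : ∀ θ : EuclideanSpace ℝ (Fin 2), ∀ i, lam θ i = θ 0 * Real.exp (θ 1 * x i))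
    (ha : ∀ θ : EuclideanSpace ℝ (Fin 2), ∀ i,
      a θ i = (∑ l ∈ Finset.Icc 1 (i - 1), (τ l - τ (l - 1)) * lam θ l) / lam θ i)
    (hGT : ∀ θ : EuclideanSpace ℝ (Fin 2), ∀ j, j ≤ L →
      GT θ j = 1 - Real.exp (-(lam θ (I j)) * (tt j + a θ (I j) - τ (I j - 1))))
    (hpiv : ∀ θ : EuclideanSpace ℝ (Fin 2), ∀ j, 1 ≤ j → j ≤ L →
      piv θ j = GT θ j - GT θ (j - 1))
    (hpivend : ∀ θ : EuclideanSpace ℝ (Fin 2), piv θ (L + 1) = 1 - GT θ L)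
    (hgradpi : ∀ θ' : EuclideanSpace ℝ (Fin 2), 0 < θ' 0 → ∀ j, 1 ≤ j → j ≤ L + 1 →
      HasGradientAt (fun u : EuclideanSpace ℝ (Fin 2) => piv u j) (gradpi θ' j) θ')
    (hC2 : ∀ j, 1 ≤ j → j ≤ L + 1 →
      ContDiffAt ℝ 2 (fun θ' : EuclideanSpace ℝ (Fin 2) => piv θ' j) θ₀)
    (hJ : J = ∑ j ∈ Finset.Icc 1 (L + 1),
      piv θ₀ j ^ (β - 1) •
        Matrix.vecMulVec (fun c => gradpi θ₀ j c) (fun c => gradpi θ₀ j c))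
    (hJinv : IsUnit J.det)
    (hn₀ : 1 ≤ n₀ ∧ n₀ ≤ L + 1)
    (hδ : 0 < δ)
    (hθc0 : θc 0 = θ₀)
    (hθcdiff : DifferentiableAt ℝ θc 0)
    (hθcin : ∀ ε ∈ Set.Ioo (-δ) δ, 0 < θc ε 0)
    (hesteq : ∀ ε ∈ Set.Ioo (-δ) δ,
      ∑ j ∈ Finset.Icc 1 (L + 1),
        (piv (θc ε) j ^ (β - 1)
          * (piv (θc ε) j
              - ((1 - ε) * piv θ₀ j + ε * (if j = n₀ then (1 : ℝ) else 0))))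
          • gradpi (θc ε) j = 0) :
    ∀ c : Fin 2,
      deriv θc 0 c =
        (J⁻¹.mulVec fun c' =>
          (∑ j ∈ Finset.Icc 1 (L + 1),
            (piv θ₀ j ^ (β - 1) * ((if j = n₀ then (1 : ℝ) else 0) - piv θ₀ j))
              • gradpi θ₀ j) c') c := by
  classical
  have hθcHas : HasDerivAt θc (deriv θc 0) 0 := hθcdiff.hasDerivAt
  set u : EuclideanSpace ℝ (Fin 2) := deriv θc 0 with hu
  set Δ : ℕ → ℝ := fun j => if j = n₀ then (1 : ℝ) else 0 with hΔ
  -- positivity of the cell probabilities at θ₀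
  have hlampos : ∀ i, 0 < lam θ₀ i := fun i => by
    rw [hlam]; positivity
  have hΛform : ∀ j, j ≤ L → lam θ₀ (I j) * (tt j + a θ₀ (I j) - τ (I j - 1))
      = (∑ l ∈ Finset.Icc 1 (I j - 1), (τ l - τ (l - 1)) * lam θ₀ l)
        + lam θ₀ (I j) * (tt j - τ (I j - 1)) := by
    intro j hj
    rw [ha]
    have h0 : lam θ₀ (I j) ≠ 0 := (hlampos _).ne'
    field_simp
    ring
  have hΛmono : ∀ j, 1 ≤ j → j ≤ L →
      lam θ₀ (I (j - 1)) * (tt (j - 1) + a θ₀ (I (j - 1)) - τ (I (j - 1) - 1))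
        < lam θ₀ (I j) * (tt j + a θ₀ (I j) - τ (I j - 1)) := by
    intro j hj1 hjL
    rw [hΛform (j - 1) (by omega), hΛform j hjL]
    obtain ⟨h1, h2, h3, h4⟩ := hreg j hjL
    obtain ⟨h1', h2', h3', h4'⟩ := hreg (j - 1) (by omega)
    have htt : tt (j - 1) < tt j := by
      have := htmono (j - 1) (by omega)
      rwa [Nat.sub_add_cancel hj1] at this
    exact cumexp_strict_mono hlampos hτmono h1' h2' h1 h2 h3' h3 h4' h4 htt
  have hGTval : ∀ j, j ≤ L →
      GT θ₀ j = 1 - Real.exp (-(lam θ₀ (I j) * (tt j + a θ₀ (I j) - τ (I j - 1)))) := by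
    intro j hj
    rw [hGT θ₀ j hj, neg_mul]
  have hpivpos : ∀ j, 1 ≤ j → j ≤ L + 1 → 0 < piv θ₀ j := by
    intro j hj1 hj2
    rcases Nat.lt_or_ge j (L + 1) with hlt | hge
    · have hjL : j ≤ L := by omega
      rw [hpiv θ₀ j hj1 hjL, hGTval j hjL, hGTval (j - 1) (by omega)]
      have h := Real.exp_lt_exp.mpr (neg_lt_neg (hΛmono j hj1 hjL))
      linarith
    · have hj : j = L + 1 := by omega
      subst hj
      rw [hpivend, hGTval L le_rfl]
      have := Real.exp_pos (-(lam θ₀ (I L) * (tt L + a θ₀ (I L) - τ (I L - 1))))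
      linarith
  -- calculus of the estimating equation
  have hIoo : Set.Ioo (-δ) δ ∈ nhds (0 : ℝ) := Ioo_mem_nhds (by linarith) hδ
  have hFj : ∀ j ∈ Finset.Icc 1 (L + 1),
      HasDerivAt (fun ε => (piv (θc ε) j ^ (β - 1)
          * (piv (θc ε) j - ((1 - ε) * piv θ₀ j + ε * Δ j))) • gradpi (θc ε) j)
        ((piv θ₀ j ^ (β - 1) * (⟪gradpi θ₀ j, u⟫ + piv θ₀ j - Δ j)) • gradpi θ₀ j) 0 := by
    intro j hjmem
    rw [Finset.mem_Icc] at hjmem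
    obtain ⟨hj1, hj2⟩ := hjmem
    have hfd : HasFDerivAt (fun θ' => piv θ' j)
        (InnerProductSpace.toDual ℝ _ (gradpi θ₀ j)) (θc 0) := by
      rw [hθc0]
      exact (hgradpi θ₀ hθ₀ j hj1 hj2).hasFDerivAt
    have hφ : HasDerivAt (fun ε => piv (θc ε) j) ⟪gradpi θ₀ j, u⟫ 0 := by
      have := hfd.comp_hasDerivAt 0 hθcHas
      simpa [InnerProductSpace.toDual_apply_apply, Function.comp_def] using this
    have hh : HasDerivAt (fun ε => piv (θc ε) j - ((1 - ε) * piv θ₀ j + ε * Δ j))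
        (⟪gradpi θ₀ j, u⟫ + piv θ₀ j - Δ j) 0 := by
      have h2 : HasDerivAt (fun ε : ℝ => (1 - ε) * piv θ₀ j + ε * Δ j)
          (-piv θ₀ j + Δ j) 0 := by
        have := (((hasDerivAt_id (0:ℝ)).const_sub 1).mul_const (piv θ₀ j)).add
          ((hasDerivAt_id (0:ℝ)).mul_const (Δ j))
        simpa [Pi.add_def] using this
      have := hφ.fun_sub h2
      refine this.congr_deriv ?_
      ring
    have hpcont : ContinuousAt (fun ε => piv (θc ε) j ^ (β - 1)) 0 := by
      refine (hφ.continuousAt).rpow_const (Or.inl ?_)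
      show piv (θc 0) j ≠ 0
      rw [hθc0]
      exact (hpivpos j hj1 hj2).ne'
    have hc0 : (fun ε => piv (θc ε) j - ((1 - ε) * piv θ₀ j + ε * Δ j)) 0 = 0 := by
      simp [hθc0]
    have hcd : HasDerivAt (fun ε => piv (θc ε) j ^ (β - 1)
        * (piv (θc ε) j - ((1 - ε) * piv θ₀ j + ε * Δ j)))
        (piv θ₀ j ^ (β - 1) * (⟪gradpi θ₀ j, u⟫ + piv θ₀ j - Δ j)) 0 := by
      have := hasDerivAt_mul_of_continuousAt_zero hpcont hh hc0
      simpa [hθc0] using this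
    -- differentiability of ε ↦ gradpi (θc ε) j
    have hgradD : DifferentiableAt ℝ
        (fun θ' : EuclideanSpace ℝ (Fin 2) => gradient (fun v => piv v j) θ') θ₀ := by
      have hfC : ContDiffAt ℝ 1 (fderiv ℝ (fun θ' : EuclideanSpace ℝ (Fin 2) => piv θ' j)) θ₀ :=
        (hC2 j hj1 hj2).fderiv_right (le_refl 2)
      have hfdiff : DifferentiableAt ℝ
          (fderiv ℝ (fun θ' : EuclideanSpace ℝ (Fin 2) => piv θ' j)) θ₀ :=
        hfC.differentiableAt one_ne_zero
      exact ((InnerProductSpace.toDual ℝ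
        (EuclideanSpace ℝ (Fin 2))).symm.toContinuousLinearEquiv.differentiableAt).comp θ₀ hfdiff
    have heqw : (fun ε => gradpi (θc ε) j)
        =ᶠ[nhds (0:ℝ)] (fun ε => gradient (fun v => piv v j) (θc ε)) := by
      filter_upwards [hIoo] with ε hε
      exact ((hgradpi (θc ε) (hθcin ε hε) j hj1 hj2).gradient).symm
    have hwD : DifferentiableAt ℝ (fun ε => gradpi (θc ε) j) 0 := by
      have hcomp : DifferentiableAt ℝ (fun ε => gradient (fun v => piv v j) (θc ε)) 0 := by
        have h5 : DifferentiableAt ℝ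
            (fun θ' : EuclideanSpace ℝ (Fin 2) => gradient (fun v => piv v j) θ') (θc 0) := by
          rw [hθc0]; exact hgradD
        exact h5.comp 0 hθcdiff
      exact hcomp.congr_of_eventuallyEq heqw
    have hw : HasDerivAt (fun ε => gradpi (θc ε) j)
        (deriv (fun ε => gradpi (θc ε) j) 0) 0 := hwD.hasDerivAt
    have := hcd.fun_smul hw
    refine this.congr_deriv ?_
    have hc0' : piv (θc 0) j ^ (β - 1)
        * (piv (θc 0) j - ((1 - (0:ℝ)) * piv θ₀ j + 0 * Δ j)) = 0 := by
      simp [hθc0]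
    rw [hc0', zero_smul, zero_add, hθc0]
  have hFsum : HasDerivAt (fun ε => ∑ j ∈ Finset.Icc 1 (L + 1),
      (piv (θc ε) j ^ (β - 1)
        * (piv (θc ε) j - ((1 - ε) * piv θ₀ j + ε * Δ j))) • gradpi (θc ε) j)
      (∑ j ∈ Finset.Icc 1 (L + 1),
        (piv θ₀ j ^ (β - 1) * (⟪gradpi θ₀ j, u⟫ + piv θ₀ j - Δ j)) • gradpi θ₀ j) 0 :=
    HasDerivAt.fun_sum hFj
  have hF0 : (fun ε => ∑ j ∈ Finset.Icc 1 (L + 1),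
      (piv (θc ε) j ^ (β - 1)
        * (piv (θc ε) j - ((1 - ε) * piv θ₀ j + ε * Δ j))) • gradpi (θc ε) j)
      =ᶠ[nhds (0:ℝ)] (fun _ => (0 : EuclideanSpace ℝ (Fin 2))) := by
    filter_upwards [hIoo] with ε hε
    simpa only [hΔ] using hesteq ε hε
  have hkey : (∑ j ∈ Finset.Icc 1 (L + 1),
      (piv θ₀ j ^ (β - 1) * (⟪gradpi θ₀ j, u⟫ + piv θ₀ j - Δ j)) • gradpi θ₀ j)
      = 0 := by
    have h1 : HasDerivAt (fun _ : ℝ => (0 : EuclideanSpace ℝ (Fin 2)))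
        (∑ j ∈ Finset.Icc 1 (L + 1),
          (piv θ₀ j ^ (β - 1) * (⟪gradpi θ₀ j, u⟫ + piv θ₀ j - Δ j)) • gradpi θ₀ j) 0 :=
      hFsum.congr_of_eventuallyEq hF0.symm
    exact h1.unique (hasDerivAt_const 0 0)
  have hsplit : (∑ j ∈ Finset.Icc 1 (L + 1),
      (piv θ₀ j ^ (β - 1) * ⟪gradpi θ₀ j, u⟫) • gradpi θ₀ j)
      = ∑ j ∈ Finset.Icc 1 (L + 1),
        (piv θ₀ j ^ (β - 1) * (Δ j - piv θ₀ j)) • gradpi θ₀ j := by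
    rw [← sub_eq_zero, ← Finset.sum_sub_distrib, ← hkey]
    refine Finset.sum_congr rfl fun j hj => ?_
    rw [← sub_smul]
    congr 1
    ring
  -- componentwise computations
  have hcomp : ∀ (r : ℕ → ℝ) (c : Fin 2),
      (∑ j ∈ Finset.Icc 1 (L + 1), r j • gradpi θ₀ j) c
        = ∑ j ∈ Finset.Icc 1 (L + 1), r j * gradpi θ₀ j c := by
    intro r c
    have h := map_sum (EuclideanSpace.proj c (𝕜 := ℝ))
      (fun j => r j • gradpi θ₀ j) (Finset.Icc 1 (L + 1))
    simp only [PiLp.proj_apply, map_smul, smul_eq_mul] at h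
    exact h
  have hinner : ∀ j, ⟪gradpi θ₀ j, u⟫ = ∑ c' : Fin 2, gradpi θ₀ j c' * u c' := by
    intro j
    rw [PiLp.inner_apply]
    simp [RCLike.inner_apply]
    ring
  have hJentry : ∀ c c' : Fin 2, J c c' = ∑ j ∈ Finset.Icc 1 (L + 1),
      piv θ₀ j ^ (β - 1) * (gradpi θ₀ j c * gradpi θ₀ j c') := by
    intro c c'
    rw [hJ]
    simp [Matrix.sum_apply, Matrix.vecMulVec_apply]
  have hmv : J.mulVec (fun c' => u c')
      = fun c => (∑ j ∈ Finset.Icc 1 (L + 1),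
          (piv θ₀ j ^ (β - 1) * (Δ j - piv θ₀ j)) • gradpi θ₀ j) c := by
    funext c
    have hlhs : J.mulVec (fun c' => u c') c
        = ∑ j ∈ Finset.Icc 1 (L + 1),
            (piv θ₀ j ^ (β - 1) * ⟪gradpi θ₀ j, u⟫) * gradpi θ₀ j c := by
      simp only [Matrix.mulVec, dotProduct, hJentry, Finset.sum_mul]
      rw [Finset.sum_comm]
      refine Finset.sum_congr rfl fun j hj => ?_
      rw [hinner, Finset.mul_sum, Finset.sum_mul]
      refine Finset.sum_congr rfl fun c' _ => ?_
      ring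
    rw [hlhs, ← hcomp, hsplit]
  intro c
  have h2 : (fun c' => u c') = J⁻¹.mulVec (fun c' =>
      (∑ j ∈ Finset.Icc 1 (L + 1),
        (piv θ₀ j ^ (β - 1) * (Δ j - piv θ₀ j)) • gradpi θ₀ j) c') := by
    have h3 := congrArg (J⁻¹.mulVec) hmv
    rwa [Matrix.mulVec_mulVec, Matrix.nonsing_inv_mul J hJinv, Matrix.one_mulVec] at h3
  have h4 := congrFun h2 c
  simpa only [hΔ] using h4
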